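/- Assume in addition that N is Hausdorff and that there exists ε > 0 such that α(w(x)) > −1 + ε for all x ∈ N. Then the ℝ^k-action (τ_h) on M = N × ℝ^k is free and proper. -/

import Mathlib

open MeasureTheory

/-- If a continuous function is bounded below by `ε`, its primitive dominates `ε * |t|`. -/
lemma key_lb {f : ℝ → ℝ} (hf : Continuous f) {ε : ℝ}
    (hlb : ∀ s, ε ≤ f s) (t : ℝ) : ε * |t| ≤ |∫ s in (0:ℝ)..t, f s| := by
  rcases le_or_gt 0 t with ht | ht
  · have h1 : ε * t ≤ ∫ s in (0:ℝ)..t, f s := by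
      calc ε * t = ∫ _ in (0:ℝ)..t, ε := by
            rw [intervalIntegral.integral_const, smul_eq_mul]; ring
        _ ≤ _ := intervalIntegral.integral_mono_on ht intervalIntegrable_const
            (hf.intervalIntegrable 0 t) (fun x _ => hlb x)
    rw [abs_of_nonneg ht]
    exact h1.trans (le_abs_self _)
  · have h1 : ε * (-t) ≤ ∫ s in t..(0:ℝ), f s := by
      calc ε * (-t) = ∫ _ in t..(0:ℝ), ε := by
            rw [intervalIntegral.integral_const, smul_eq_mul]; ring
        _ ≤ _ := intervalIntegral.integral_mono_on ht.le intervalIntegrable_const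
            (hf.intervalIntegrable t 0) (fun x _ => hlb x)
    rw [intervalIntegral.integral_symm t 0, abs_neg, abs_of_neg ht]
    exact h1.trans (le_abs_self _)

/-- The action of `h ∈ ℝ^k` on `M = N × ℝ^k`:
`τ_h(x, v) = (φ_{α(h)}(x), v + h + ∫_0^{α(h)} w(φ_s(x)) ds)`. -/
noncomputable def tauAct {N : Type*} {k : ℕ} (φ : ℝ → N → N)
    (w : N → EuclideanSpace ℝ (Fin k)) (α : EuclideanSpace ℝ (Fin k) →ₗ[ℝ] ℝ)
    (h : EuclideanSpace ℝ (Fin k)) (z : N × EuclideanSpace ℝ (Fin k)) :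
    N × EuclideanSpace ℝ (Fin k) :=
  (φ (α h) z.1, z.2 + h + ∫ s in (0:ℝ)..(α h), w (φ s z.1))

/-- Assume `N` is Hausdorff and there exists `ε > 0` with `α(w(x)) > −1 + ε` for all `x`.
Then the `ℝ^k`-action `(τ_h)` on `M = N × ℝ^k` is free and proper. -/
theorem stmt3 {N : Type*} [TopologicalSpace N] [T2Space N] {k : ℕ} (hk : 1 ≤ k)
    (φ : ℝ → N → N) (hφcont : Continuous fun p : ℝ × N => φ p.1 p.2)
    (hφ0 : ∀ x, φ 0 x = x) (hφadd : ∀ t s x, φ (t + s) x = φ t (φ s x))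
    (w : N → EuclideanSpace ℝ (Fin k)) (hw : Continuous w)
    (α : EuclideanSpace ℝ (Fin k) →ₗ[ℝ] ℝ)
    (hε : ∃ ε > (0:ℝ), ∀ x : N, -1 + ε < α (w x)) :
    (∀ (h : EuclideanSpace ℝ (Fin k)) (z : N × EuclideanSpace ℝ (Fin k)),
        tauAct φ w α h z = z → h = 0) ∧
    (∀ Q : Set ((N × EuclideanSpace ℝ (Fin k)) × (N × EuclideanSpace ℝ (Fin k))),
        IsCompact Q →
        IsCompact {p : EuclideanSpace ℝ (Fin k) × (N × EuclideanSpace ℝ (Fin k)) |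
          (tauAct φ w α p.1 p.2, p.2) ∈ Q}) := by
  obtain ⟨ε, εpos, hεw⟩ := hε
  set A : EuclideanSpace ℝ (Fin k) →L[ℝ] ℝ := LinearMap.toContinuousLinearMap α with hA
  have hAeq : ∀ v, α v = A v := fun v => rfl
  -- continuity of the flow lines
  have hwφ : ∀ x : N, Continuous fun s : ℝ => w (φ s x) := fun x =>
    hw.comp (hφcont.comp (continuous_id.prodMk continuous_const))
  have hgc : ∀ x : N, Continuous fun s : ℝ => α (w (φ s x)) := fun x =>
    A.continuous.comp (hwφ x)
  -- the key lower bound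
  have key : ∀ (x : N) (t : ℝ),
      ε * |t| ≤ |t + ∫ s in (0:ℝ)..t, α (w (φ s x))| := by
    intro x t
    have heq : t + (∫ s in (0:ℝ)..t, α (w (φ s x)))
        = ∫ s in (0:ℝ)..t, (1 + α (w (φ s x))) := by
      rw [intervalIntegral.integral_add intervalIntegrable_const
        ((hgc x).intervalIntegrable 0 t)]
      simp
    rw [heq]
    exact key_lb (continuous_const.add (hgc x))
      (fun s => by have := hεw (φ s x); show ε ≤ 1 + α (w (φ s x)); linarith) t
  -- `α` commutes with the integral
  have hαI : ∀ (x : N) (t : ℝ),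
      α (∫ s in (0:ℝ)..t, w (φ s x)) = ∫ s in (0:ℝ)..t, α (w (φ s x)) := by
    intro x t
    exact (A.intervalIntegral_comp_comm ((hwφ x).intervalIntegrable 0 t)).symm
  constructor
  · -- freeness
    intro h z hz
    set I := ∫ s in (0:ℝ)..(α h), w (φ s z.1) with hI
    have h2 : z.2 + h + I = z.2 := congrArg Prod.snd hz
    have hhI : h + I = 0 := by
      rw [add_assoc] at h2
      exact add_eq_left.mp h2
    have hF : α h + ∫ s in (0:ℝ)..(α h), α (w (φ s z.1)) = 0 := by
      rw [← hαI, ← map_add, hhI, map_zero]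
    have hkey := key z.1 (α h)
    rw [hF, abs_zero] at hkey
    have hαh : α h = 0 := by
      have h0 : |α h| = 0 :=
        le_antisymm (by nlinarith [abs_nonneg (α h)]) (abs_nonneg _)
      exact abs_eq_zero.mp h0
    have hI0 : I = 0 := by rw [hI, hαh, intervalIntegral.integral_same]
    rw [hI0, add_zero] at hhI
    exact hhI
  · -- properness
    intro Q hQ
    rcases Q.eq_empty_or_nonempty with rfl | ⟨m₀, hm₀⟩
    · simp only [Set.mem_empty_iff_false, Set.setOf_false]
      exact isCompact_empty
    -- continuity of the map `p ↦ (τ_{p.1} p.2, p.2)`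
    have hcont : Continuous fun p :
        EuclideanSpace ℝ (Fin k) × (N × EuclideanSpace ℝ (Fin k)) =>
        (tauAct φ w α p.1 p.2, p.2) := by
      refine Continuous.prodMk ?_ continuous_snd
      refine Continuous.prodMk ?_ ?_
      · exact hφcont.comp ((A.continuous.comp continuous_fst).prodMk
          (continuous_fst.comp continuous_snd))
      · refine ((continuous_snd.comp continuous_snd).add continuous_fst).add ?_
        exact intervalIntegral.continuous_parametric_intervalIntegral_of_continuous
          (f := fun (p : EuclideanSpace ℝ (Fin k) × (N × EuclideanSpace ℝ (Fin k)))
            (s : ℝ) => w (φ s p.2.1))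
          (hw.comp (hφcont.comp (continuous_snd.prodMk
            ((continuous_fst.comp continuous_snd).comp continuous_fst))))
          (A.continuous.comp continuous_fst)
    -- bound on the difference of second components over `Q`
    obtain ⟨C₁, hC₁⟩ : ∃ C₁, ∀ m ∈ Q, ‖m.1.2 - m.2.2‖ ≤ C₁ := by
      obtain ⟨C₁, hC₁⟩ := (hQ.image (Continuous.norm
        ((continuous_snd.comp continuous_fst).sub
          (continuous_snd.comp continuous_snd)))).bddAbove
      exact ⟨C₁, fun m hm => hC₁ (Set.mem_image_of_mem _ hm)⟩
    have hC₁0 : 0 ≤ C₁ := le_trans (norm_nonneg _) (hC₁ m₀ hm₀)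
    set T : ℝ := (‖A‖ * C₁) / ε with hTdef
    have hT0 : 0 ≤ T := div_nonneg (mul_nonneg (norm_nonneg _) hC₁0) εpos.le
    -- bound on `|α h|`
    have hT : ∀ (h : EuclideanSpace ℝ (Fin k)) (z : N × EuclideanSpace ℝ (Fin k)),
        (tauAct φ w α h z, z) ∈ Q → |α h| ≤ T := by
      intro h z hm
      have hd : ‖(tauAct φ w α h z).2 - z.2‖ ≤ C₁ := hC₁ (tauAct φ w α h z, z) hm
      have hsub : (tauAct φ w α h z).2 - z.2
          = h + ∫ s in (0:ℝ)..(α h), w (φ s z.1) := by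
        show z.2 + h + _ - z.2 = _
        abel
      rw [hsub] at hd
      have hkey := key z.1 (α h)
      have hineq : |α h + ∫ s in (0:ℝ)..(α h), α (w (φ s z.1))| ≤ ‖A‖ * C₁ := by
        rw [← hαI, ← map_add]
        calc |α (h + ∫ s in (0:ℝ)..(α h), w (φ s z.1))|
            ≤ ‖A‖ * ‖h + ∫ s in (0:ℝ)..(α h), w (φ s z.1)‖ := A.le_opNorm _
          _ ≤ ‖A‖ * C₁ := mul_le_mul_of_nonneg_left hd (norm_nonneg _)
      rw [hTdef, le_div_iff₀ εpos, mul_comm]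
      exact le_trans hkey hineq
    -- bound on the integral
    have hK₁ : IsCompact ((fun m : (N × EuclideanSpace ℝ (Fin k)) ×
        (N × EuclideanSpace ℝ (Fin k)) => m.2.1) '' Q) :=
      hQ.image (continuous_fst.comp continuous_snd)
    set L : Set N := (fun p : ℝ × N => φ p.1 p.2) ''
      (Set.Icc (-T) T ×ˢ ((fun m : (N × EuclideanSpace ℝ (Fin k)) ×
        (N × EuclideanSpace ℝ (Fin k)) => m.2.1) '' Q)) with hLdef
    have hLcpt : IsCompact L := ((isCompact_Icc).prod hK₁).image hφcont
    obtain ⟨B, hB⟩ : ∃ B, ∀ y ∈ L, ‖w y‖ ≤ B := by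
      obtain ⟨B, hB⟩ := (hLcpt.image hw.norm).bddAbove
      exact ⟨B, fun y hy => hB (Set.mem_image_of_mem _ hy)⟩
    have hB0 : 0 ≤ B := by
      refine le_trans (norm_nonneg (w (φ 0 m₀.2.1))) (hB _ ?_)
      exact ⟨(0, m₀.2.1), ⟨⟨neg_nonpos.mpr hT0, hT0⟩,
        Set.mem_image_of_mem _ hm₀⟩, rfl⟩
    have hInt : ∀ (h : EuclideanSpace ℝ (Fin k)) (z : N × EuclideanSpace ℝ (Fin k)),
        (tauAct φ w α h z, z) ∈ Q →
        ‖∫ s in (0:ℝ)..(α h), w (φ s z.1)‖ ≤ B * T := by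
      intro h z hm
      obtain ⟨hT1, hT2⟩ := abs_le.mp (hT h z hm)
      have hb : ∀ s ∈ Set.uIoc (0:ℝ) (α h), ‖w (φ s z.1)‖ ≤ B := by
        intro s hs
        have hsmem : s ∈ Set.Icc (-T) T := by
          rcases Set.mem_uIoc.mp hs with ⟨h3, h4⟩ | ⟨h3, h4⟩ <;>
            exact ⟨by linarith, by linarith⟩
        exact hB _ ⟨(s, z.1), ⟨hsmem, ⟨(tauAct φ w α h z, z), hm, rfl⟩⟩, rfl⟩
      calc ‖∫ s in (0:ℝ)..(α h), w (φ s z.1)‖ ≤ B * |α h - 0| :=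
            intervalIntegral.norm_integral_le_of_norm_le_const hb
        _ ≤ B * T := by
            rw [sub_zero]
            exact mul_le_mul_of_nonneg_left (abs_le.mpr ⟨hT1, hT2⟩) hB0
    -- the set is a closed subset of a compact set
    set R : ℝ := C₁ + B * T with hRdef
    refine IsCompact.of_isClosed_subset
      ((isCompact_closedBall (0 : EuclideanSpace ℝ (Fin k)) R).prod
        (hQ.image continuous_snd))
      (hQ.isClosed.preimage hcont) ?_
    rintro ⟨h, z⟩ hp
    have hm : (tauAct φ w α h z, z) ∈ Q := hp
    constructor
    · -- ‖h‖ ≤ R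
      have hd : ‖(tauAct φ w α h z).2 - z.2‖ ≤ C₁ := hC₁ (tauAct φ w α h z, z) hm
      have hsub : (tauAct φ w α h z).2 - z.2
          = h + ∫ s in (0:ℝ)..(α h), w (φ s z.1) := by
        show z.2 + h + _ - z.2 = _
        abel
      rw [hsub] at hd
      have : ‖h‖ ≤ C₁ + B * T := by
        have h1 := hInt h z hm
        calc ‖h‖ = ‖(h + ∫ s in (0:ℝ)..(α h), w (φ s z.1))
              - ∫ s in (0:ℝ)..(α h), w (φ s z.1)‖ := by rw [add_sub_cancel_right]
          _ ≤ ‖h + ∫ s in (0:ℝ)..(α h), w (φ s z.1)‖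
              + ‖∫ s in (0:ℝ)..(α h), w (φ s z.1)‖ := norm_sub_le _ _
          _ ≤ C₁ + B * T := add_le_add hd h1
      simpa [Metric.mem_closedBall, dist_zero_right] using this
    · exact ⟨(tauAct φ w α h z, z), hm, rfl⟩
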